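/- Cut existence (fullness for small families): for any small index types ι and κ and any families l : ι → Surreal and u : κ → Surreal such that l i < u j for all i : ι and j : κ, there exists a surreal number z with l i < z for all i and z < u j for all j. -/

import Mathlib

universe u

namespace SetTheory

/-- Pre-games, as formerly in Mathlib (`SetTheory.PGame`). -/
inductive PGame : Type (u + 1)
  | mk : ∀ α β : Type u, (α → PGame) → (β → PGame) → PGame

namespace PGame

def LeftMoves : PGame.{u} → Type u
  | mk l _ _ _ => l

def RightMoves : PGame.{u} → Type u
  | mk _ r _ _ => r

def moveLeft : ∀ g : PGame.{u}, LeftMoves g → PGame.{u}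
  | mk _ _ L _ => L

def moveRight : ∀ g : PGame.{u}, RightMoves g → PGame.{u}
  | mk _ _ _ R => R

mutual
/-- `x ≤ y` for pre-games: no left option of `x` is `≥ y` and no right option of `y` is `≤ x`. -/
inductive LE' : PGame.{u} → PGame.{u} → Prop
  | intro (x y : PGame.{u}) :
      (∀ i, LF' (x.moveLeft i) y) → (∀ j, LF' x (y.moveRight j)) → LE' x y
/-- `x ⧏ y` for pre-games (equivalently `¬ y ≤ x`). -/
inductive LF' : PGame.{u} → PGame.{u} → Prop
  | ofLeft (x y : PGame.{u}) (i : y.LeftMoves) : LE' x (y.moveLeft i) → LF' x y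
  | ofRight (x y : PGame.{u}) (j : x.RightMoves) : LE' (x.moveRight j) y → LF' x y
end

/-- `x < y` for pre-games, as in Mathlib's preorder: `x ≤ y ∧ x ⧏ y`. -/
def Lt' (x y : PGame.{u}) : Prop := LE' x y ∧ LF' x y

def Numeric : PGame.{u} → Prop
  | ⟨_, _, L, R⟩ => (∀ i j, Lt' (L i) (R j)) ∧ (∀ i, Numeric (L i)) ∧ ∀ j, Numeric (R j)

end PGame

end SetTheory

/-- Surreal numbers: numeric pre-games modulo `x ≤ y ∧ y ≤ x`. -/
def Surreal : Type (u + 1) :=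
  Quot (fun x y : {x : SetTheory.PGame.{u} // SetTheory.PGame.Numeric x} =>
    SetTheory.PGame.LE' x.1 y.1 ∧ SetTheory.PGame.LE' y.1 x.1)

/-- The order on surreals, read on representatives (well defined, as in old Mathlib). -/
instance : LT Surreal.{u} :=
  ⟨fun a b => ∃ x y, Quot.mk _ x = a ∧ Quot.mk _ y = b ∧ SetTheory.PGame.Lt' x.1 y.1⟩

open SetTheory PGame

theorem pg_le_lf {x y : PGame.{u}} (h : LE' x y) (i : x.LeftMoves) : LF' (x.moveLeft i) y := by
  cases h with
  | intro _ _ h1 _ => exact h1 i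

theorem pg_le_lf' {x y : PGame.{u}} (h : LE' x y) (j : y.RightMoves) : LF' x (y.moveRight j) := by
  cases h with
  | intro _ _ _ h2 => exact h2 j

theorem pg_refl (x : PGame.{u}) : LE' x x := by
  induction x with
  | mk α β L R ihL ihR =>
    exact LE'.intro _ _ (fun i => LF'.ofLeft _ _ i (ihL i)) (fun j => LF'.ofRight _ _ j (ihR j))

theorem pg_pair (x y : PGame.{u}) :
    (LF' x y ↔ ¬ LE' y x) ∧ (LF' y x ↔ ¬ LE' x y) := by
  induction x generalizing y with
  | mk α β L R ihL ihR =>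
    induction y with
    | mk γ δ L' R' ihL' ihR' =>
      refine ⟨⟨fun h hyx => ?_, fun h => ?_⟩, ⟨fun h hxy => ?_, fun h => ?_⟩⟩
      · cases h with
        | ofLeft _ _ k hk => exact ((ihL' k).2.1 (pg_le_lf hyx k)) hk
        | ofRight _ _ j hj => exact ((ihR j _).2.1 (pg_le_lf' hyx j)) hj
      · by_contra hc
        apply h
        refine LE'.intro _ _ (fun k => ?_) (fun j => ?_)
        · exact (ihL' k).2.2 (fun hk => hc (LF'.ofLeft _ _ k hk))
        · exact (ihR j _).2.2 (fun hj => hc (LF'.ofRight _ _ j hj))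
      · cases h with
        | ofLeft _ _ i hi => exact ((ihL i _).1.1 (pg_le_lf hxy i)) hi
        | ofRight _ _ m hm => exact ((ihR' m).1.1 (pg_le_lf' hxy m)) hm
      · by_contra hc
        apply h
        refine LE'.intro _ _ (fun i => ?_) (fun m => ?_)
        · exact (ihL i _).1.2 (fun hi => hc (LF'.ofLeft _ _ i hi))
        · exact (ihR' m).1.2 (fun hm => hc (LF'.ofRight _ _ m hm))

theorem pg_trans_step {x y z : PGame.{u}}
    (h1 : ∀ i, LE' y z → LE' z (x.moveLeft i) → LE' y (x.moveLeft i))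
    (h2 : ∀ j, LE' (z.moveRight j) x → LE' x y → LE' (z.moveRight j) y) :
    LE' x y → LE' y z → LE' x z := by
  intro hxy hyz
  refine LE'.intro _ _ (fun i => ?_) (fun j => ?_)
  · by_contra hc
    have hzx : LE' z (x.moveLeft i) := by
      by_contra hc'
      exact hc ((pg_pair _ _).1.2 hc')
    exact (pg_pair _ _).1.1 (pg_le_lf hxy i) (h1 i hyz hzx)
  · by_contra hc
    have hzx : LE' (z.moveRight j) x := by
      by_contra hc'
      exact hc ((pg_pair _ _).1.2 hc')
    exact (pg_pair _ _).1.1 (pg_le_lf' hyz j) (h2 j hzx hxy)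

theorem pg_trans3 (x y z : PGame.{u}) :
    (LE' x y → LE' y z → LE' x z) ∧ (LE' y z → LE' z x → LE' y x) ∧
      (LE' z x → LE' x y → LE' z y) := by
  induction x generalizing y z with
  | mk α β L R ihL ihR =>
    induction y generalizing z with
    | mk γ δ L' R' ihL' ihR' =>
      induction z with
      | mk ε ζ L'' R'' ihL'' ihR'' =>
        exact ⟨pg_trans_step (fun i => (ihL i _ _).2.1) (fun j => (ihR'' j).2.2),
          pg_trans_step (fun k => (ihL' k _).2.2) (fun m => (ihR m _ _).1),
          pg_trans_step (fun k => (ihL'' k).1) (fun m => (ihR' m _).2.1)⟩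

theorem pg_trans {x y z : PGame.{u}} (h1 : LE' x y) (h2 : LE' y z) : LE' x z :=
  (pg_trans3 x y z).1 h1 h2

theorem pg_le_lf_trans {a b c : PGame.{u}} (h1 : LE' a b) (h2 : LF' b c) : LF' a c :=
  (pg_pair a c).1.2 (fun hca => (pg_pair b c).1.1 h2 (pg_trans hca h1))

theorem pg_lf_le_trans {a b c : PGame.{u}} (h1 : LF' a b) (h2 : LE' b c) : LF' a c :=
  (pg_pair a c).1.2 (fun hca => (pg_pair a b).1.1 h1 (pg_trans h2 hca))

theorem pg_numeric_opt (x : PGame.{u}) (hx : Numeric x) :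
    (∀ k, LE' (x.moveLeft k) x) ∧ (∀ j, LE' x (x.moveRight j)) := by
  induction x with
  | mk α β L R ihL ihR =>
    rw [Numeric] at hx
    obtain ⟨h1, h2, h3⟩ := hx
    exact ⟨fun k => LE'.intro _ _ (fun m => LF'.ofLeft _ _ k ((ihL k (h2 k)).1 m))
        (fun j => And.right (h1 k j)),
      fun j => LE'.intro _ _ (fun i => And.right (h1 i j))
        (fun m => LF'.ofRight _ _ j ((ihR j (h3 j)).2 m))⟩

theorem surreal_rel_of_eq {a b : {x : PGame.{u} // Numeric x}}
    (h : (Quot.mk (fun x y : {x : PGame.{u} // Numeric x} => LE' x.1 y.1 ∧ LE' y.1 x.1) a)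
      = Quot.mk _ b) : LE' a.1 b.1 ∧ LE' b.1 a.1 := by
  have := Quot.eqvGen_exact h
  clear h
  induction this with
  | rel x y hxy => exact hxy
  | refl x => exact ⟨pg_refl _, pg_refl _⟩
  | symm x y _ ih => exact ⟨ih.2, ih.1⟩
  | trans x y z _ _ ih1 ih2 => exact ⟨pg_trans ih1.1 ih2.1, pg_trans ih2.2 ih1.2⟩

theorem surreal_cut_exists {ι κ : Type u} (l : ι → Surreal.{u}) (u : κ → Surreal.{u})
    (h : ∀ (i : ι) (j : κ), l i < u j) :
    ∃ z : Surreal.{u}, (∀ i, l i < z) ∧ (∀ j, z < u j) := by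
  have hlt : ∀ i j, Lt' (Quot.out (l i)).1 (Quot.out (u j)).1 := by
    intro i j
    obtain ⟨x, y, hx, hy, hxy⟩ := h i j
    have e1 := surreal_rel_of_eq (hx.trans (Quot.out_eq (l i)).symm)
    have e2 := surreal_rel_of_eq (hy.trans (Quot.out_eq (u j)).symm)
    exact And.intro (pg_trans (pg_trans e1.2 (And.left hxy)) e2.1)
      (pg_le_lf_trans e1.2 (pg_lf_le_trans (And.right hxy) e2.1))
  let zg : PGame.{u} := PGame.mk ι κ (fun i => (Quot.out (l i)).1) (fun j => (Quot.out (u j)).1)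
  have hnum : Numeric zg := by
    show Numeric (PGame.mk ι κ _ _)
    rw [Numeric]
    exact ⟨fun i j => hlt i j, fun i => (Quot.out (l i)).2, fun j => (Quot.out (u j)).2⟩
  let zs : Surreal.{u} :=
    Quot.mk (fun x y : {x : PGame.{u} // Numeric x} => LE' x.1 y.1 ∧ LE' y.1 x.1) ⟨zg, hnum⟩
  refine ⟨zs, fun i => ?_, fun j => ?_⟩
  · refine Exists.intro (Quot.out (l i)) (Exists.intro ⟨zg, hnum⟩
      (And.intro (Quot.out_eq _) (And.intro rfl ?_)))
    have hn := pg_numeric_opt _ (Quot.out (l i)).2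
    exact And.intro
      (LE'.intro _ _ (fun k => LF'.ofLeft _ zg i (hn.1 k)) (fun j => And.right (hlt i j)))
      (LF'.ofLeft _ zg i (pg_refl _))
  · refine Exists.intro ⟨zg, hnum⟩ (Exists.intro (Quot.out (u j))
      (And.intro rfl (And.intro (Quot.out_eq _) ?_)))
    have hn := pg_numeric_opt _ (Quot.out (u j)).2
    exact And.intro
      (LE'.intro _ _ (fun i => And.right (hlt i j)) (fun m => LF'.ofRight zg _ j (hn.2 m)))
      (LF'.ofRight zg _ j (pg_refl _))
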